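/- Under the hypothesis that Σ_{j=1}^n p_{B,j}(t) ≥ 1/(K-n+1) for a round t, and assuming K/c ≤ 1/(3K), the DIR(K,c) expected payoff of any row action i ≥ n+2 against the column player's mixed strategy p_B(t) satisfies ũ_{A,i}(t) ≤ -(1/(K-n+1)) + ((K-n)/(K-n+1))·(1/(3K)) < -2/(3K). -/

import Mathlib

/-- DIR row payoff normalized by ρ = c. -/
noncomputable def u1 (c : ℝ) (i j : ℕ) : ℝ := if i ≤ j + 1 then (i : ℝ) / c else -1

/-- If player B's mixed strategy puts mass at least 1/(K-n+1) on actions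
{1,…,n}, and K/c ≤ 1/(3K), then the expected DIR payoff of any row action
i ≥ n+2 is at most -(1/(K-n+1)) + ((K-n)/(K-n+1))·(1/(3K)) < -2/(3K). -/
theorem stmt11 (K : ℕ) (c : ℝ) (hK : 3 ≤ K) (hc : 0 < c)
    (hKc : (K : ℝ) / c ≤ 1 / (3 * (K : ℝ)))
    (n : ℕ) (hn1 : 1 ≤ n) (hn : n ≤ K - 2)
    (pB : ℕ → ℝ)
    (hpB0 : ∀ j ∈ Finset.Icc 1 K, 0 ≤ pB j)
    (hpB1 : ∑ j ∈ Finset.Icc 1 K, pB j = 1)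
    (hmass : (1 : ℝ) / ((K : ℝ) - n + 1) ≤ ∑ j ∈ Finset.Icc 1 n, pB j)
    (i : ℕ) (hi : n + 2 ≤ i) (hiK : i ≤ K) :
    (∑ j ∈ Finset.Icc 1 K, pB j * u1 c i j)
      ≤ -(1 / ((K : ℝ) - n + 1)) + (((K : ℝ) - n) / ((K : ℝ) - n + 1)) * (1 / (3 * (K : ℝ)))
    ∧ -(1 / ((K : ℝ) - n + 1)) + (((K : ℝ) - n) / ((K : ℝ) - n + 1)) * (1 / (3 * (K : ℝ)))
      < -2 / (3 * (K : ℝ)) := by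
  have hK2 : n + 2 ≤ K := by omega
  have hKR : (3:ℝ) ≤ (K:ℝ) := by exact_mod_cast hK
  have hnR : (n:ℝ) + 2 ≤ (K:ℝ) := by exact_mod_cast hK2
  have hn1R : (1:ℝ) ≤ (n:ℝ) := by exact_mod_cast hn1
  have hden : (0:ℝ) < (K:ℝ) - n + 1 := by linarith
  have hKpos : (0:ℝ) < 3 * (K:ℝ) := by linarith
  have hu1bound : ∀ j, u1 c i j ≤ 1 / (3 * (K:ℝ)) := by
    intro j
    by_cases h : i ≤ j + 1
    · simp only [u1, if_pos h]
      refine le_trans ?_ hKc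
      gcongr
    · simp only [u1, if_neg h]
      have h0 : (0:ℝ) ≤ 1 / (3 * (K:ℝ)) := by positivity
      linarith
  -- split sums
  have hIcc : Finset.Icc 1 K = Finset.Ioc 0 K := by
    rw [← Finset.Icc_add_one_left_eq_Ioc]; rfl
  have hIccn : Finset.Icc 1 n = Finset.Ioc 0 n := by
    rw [← Finset.Icc_add_one_left_eq_Ioc]; rfl
  have hsplit : ∀ f : ℕ → ℝ, ∑ j ∈ Finset.Icc 1 K, f j
      = ∑ j ∈ Finset.Icc 1 n, f j + ∑ j ∈ Finset.Ioc n K, f j := by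
    intro f
    rw [hIcc, hIccn, Finset.sum_Ioc_consecutive _ (Nat.zero_le n) (by omega : n ≤ K)]
  set S := ∑ j ∈ Finset.Icc 1 n, pB j with hS
  have hT : ∑ j ∈ Finset.Ioc n K, pB j = 1 - S := by
    have := hsplit pB
    rw [hpB1] at this
    linarith
  have h1 : ∑ j ∈ Finset.Icc 1 n, pB j * u1 c i j = -S := by
    rw [hS, ← Finset.sum_neg_distrib]
    apply Finset.sum_congr rfl
    intro j hj
    have hjn : j ≤ n := (Finset.mem_Icc.mp hj).2
    have : ¬ (i ≤ j + 1) := by omega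
    simp [u1, this]
  have h2 : ∑ j ∈ Finset.Ioc n K, pB j * u1 c i j
      ≤ (1 - S) * (1 / (3 * (K:ℝ))) := by
    rw [← hT, Finset.sum_mul]
    apply Finset.sum_le_sum
    intro j hj
    have hj' : j ∈ Finset.Icc 1 K := by
      simp only [Finset.mem_Ioc] at hj; simp only [Finset.mem_Icc]; omega
    exact mul_le_mul_of_nonneg_left (hu1bound j) (hpB0 j hj')
  have hSb : 1 / ((K:ℝ) - n + 1) ≤ S := hmass
  have hkey : (∑ j ∈ Finset.Icc 1 K, pB j * u1 c i j)
      ≤ -S + (1 - S) * (1 / (3 * (K:ℝ))) := by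
    rw [hsplit, h1]; linarith
  have hm : (1:ℝ) - 1 / ((K:ℝ) - n + 1) = ((K:ℝ) - n) / ((K:ℝ) - n + 1) := by
    field_simp; ring
  constructor
  · refine hkey.trans ?_
    have hfrac : (0:ℝ) < 1 / (3 * (K:ℝ)) := by positivity
    have h3 : -S + (1 - S) * (1 / (3 * (K:ℝ)))
        ≤ -(1 / ((K:ℝ) - n + 1)) + (1 - 1 / ((K:ℝ) - n + 1)) * (1 / (3 * (K:ℝ))) := by
      nlinarith
    rw [hm] at h3
    exact h3
  · rw [← hm]
    set a := 1 / ((K:ℝ) - n + 1) with ha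
    set b := 1 / (3 * (K:ℝ)) with hb
    have hKpos' : (0:ℝ) < K := by linarith
    have hmK : 1 / (K:ℝ) ≤ a := by
      rw [ha]
      apply one_div_le_one_div_of_le hden (by linarith)
    have h3b : 3 * b = 1 / (K:ℝ) := by
      rw [hb]; field_simp
    have hapos : 0 < a := by rw [ha]; positivity
    have hbpos : 0 < b := by rw [hb]; positivity
    have hgoal : -2 / (3 * (K:ℝ)) = -(2 * b) := by
      rw [hb]; ring
    rw [hgoal]
    nlinarith [mul_pos hapos hbpos]
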